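/- Let H ⊆ F be a C-monoid. Either the set {[y] : y ∈ F^×} of classes of units is contained in the reduced class semigroup C*(H,F), or their intersection equals {[1]}. Consequently, the class semigroup C(H,F) is a union of groups if and only if C*(H,F) is a union of groups. -/
import Mathlib


/-- The factorial monoid `F = F^× × ℱ(P)`, with unit group `Fu` and free
abelian monoid `ℱ(P)` modeled by `Multiplicative (P →₀ ℕ)`. -/
abbrev FM (Fu P : Type*) [CommGroup Fu] : Type _ := Fu × Multiplicative (P →₀ ℕ)

/-- `H`-equivalence on `F`: `y ~ y'` iff for all `x ∈ F`, `x*y ∈ H ↔ x*y' ∈ H`. -/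
def HRel {M : Type*} [CommMonoid M] (H : Submonoid M) (y y' : M) : Prop :=
  ∀ x : M, x * y ∈ H ↔ x * y' ∈ H

/-- `y ∈ (F \ F^×) ∪ {1}`: the representatives of the reduced class semigroup. -/
def NU1 {M : Type*} [Monoid M] (y : M) : Prop := ¬ IsUnit y ∨ y = 1

/-- The reduced class semigroup `C*(H,F)` is finite: there are finitely many
`H`-equivalence classes of elements of `(F \ F^×) ∪ {1}`. -/
def CStarFinite {M : Type*} [CommMonoid M] (H : Submonoid M) : Prop :=
  ∃ (n : ℕ) (f : Fin n → M), ∀ y : M, NU1 y → ∃ i : Fin n, HRel H y (f i)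

/-- `C*(H,F)` is a union of groups: each class `[y]` lies in some subgroup,
i.e. in the constituent group of some idempotent `[e]`: `[e] + [e] = [e]`,
`[y] + [e] = [y]` and `[y] + [z] = [e]` for some class `[z]`. -/
def CStarUnionOfGroups {M : Type*} [CommMonoid M] (H : Submonoid M) : Prop :=
  ∀ y : M, NU1 y → ∃ e : M, NU1 e ∧ HRel H (e * e) e ∧ HRel H (y * e) y ∧
    ∃ z : M, NU1 z ∧ HRel H (y * z) e

/-- `H^× = H ∩ F^×`: every element of `H` which is invertible in `F` has its
inverse in `H`. -/
def UnitsCond {M : Type*} [Monoid M] (H : Submonoid M) : Prop :=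
  ∀ u : Mˣ, (u : M) ∈ H → ((u⁻¹ : Mˣ) : M) ∈ H

/-- `H` is seminormal: for `x = a/b ∈ q(H)` (`a, b ∈ H`) with `x^n ∈ H` for all
sufficiently large `n` (i.e. `a^n = h_n * b^n` with `h_n ∈ H`), one has `x ∈ H`
(i.e. `a = h * b` with `h ∈ H`). -/
def SeminormalSub {M : Type*} [CommMonoid M] (H : Submonoid M) : Prop :=
  ∀ a b : M, a ∈ H → b ∈ H → (∃ m : ℕ, ∀ n ≥ m, ∃ h ∈ H, a ^ n = h * b ^ n) →
    ∃ h ∈ H, a = h * b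

/-- The full class semigroup `C(H,F)` is a union of groups: every class `[y]`
(`y ∈ F`) lies in the constituent group of some idempotent class. -/
def CUnionOfGroups {M : Type*} [CommMonoid M] (H : Submonoid M) : Prop :=
  ∀ y : M, ∃ e : M, HRel H (e * e) e ∧ HRel H (y * e) y ∧
    ∃ z : M, HRel H (y * z) e


section HRelLemmas
variable {M : Type*} [CommMonoid M] (H : Submonoid M)

theorem hrel_refl (a : M) : HRel H a a := fun _ => Iff.rfl

theorem hrel_symm {a b : M} (h : HRel H a b) : HRel H b a := fun x => (h x).symm

theorem hrel_trans {a b c : M} (h1 : HRel H a b) (h2 : HRel H b c) : HRel H a c :=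
  fun x => (h1 x).trans (h2 x)

theorem hrel_of_eq {a b : M} (h : a = b) : HRel H a b := h ▸ hrel_refl H a

theorem hrel_mul_left (c : M) {a b : M} (h : HRel H a b) : HRel H (c * a) (c * b) := by
  intro x
  have := h (x * c)
  simpa [mul_assoc] using this

theorem hrel_sq {y z e : M} (hyz : HRel H (y * z) e) (he : HRel H (e * e) e) :
    HRel H ((y * z) * (y * z)) e := by
  refine hrel_trans H (hrel_mul_left H (y * z) hyz) ?_
  refine hrel_trans H (hrel_of_eq H (mul_comm _ _)) ?_
  exact hrel_trans H (hrel_mul_left H e hyz) he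

end HRelLemmas

/-- For a C-monoid `H ⊆ F`: either every class of a unit of `F` equals the
class of some element of `(F \ F^×) ∪ {1}` (i.e. `{[y] : y ∈ F^×} ⊆ C*(H,F)`),
or the only unit classes lying in `C*(H,F)` are equal to `[1]`.
Consequently, `C(H,F)` is a union of groups iff `C*(H,F)` is. -/
theorem stmt_13 {Fu P : Type*} [CommGroup Fu] (H : Submonoid (FM Fu P))
    (hux : UnitsCond H) (hfin : CStarFinite H) :
    ((∀ u : FM Fu P, IsUnit u → ∃ y : FM Fu P, NU1 y ∧ HRel H u y) ∨
      (∀ u y : FM Fu P, IsUnit u → NU1 y → HRel H u y → HRel H u 1)) ∧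
    (CUnionOfGroups H ↔ CStarUnionOfGroups H) := by
  constructor
  · -- the dichotomy
    by_cases hex : ∃ u0 y0 : FM Fu P, IsUnit u0 ∧ ¬ IsUnit y0 ∧ HRel H u0 y0
    · left
      intro u hu
      obtain ⟨u0, y0, hu0, hy0, hrel⟩ := hex
      obtain ⟨w, rfl⟩ := hu0
      refine ⟨u * (↑w⁻¹ : FM Fu P) * y0, Or.inl ?_, ?_⟩
      · intro h
        exact hy0 (isUnit_of_mul_isUnit_right h)
      · have h1 : HRel H (u * (↑w⁻¹ : FM Fu P) * ↑w) (u * (↑w⁻¹ : FM Fu P) * y0) :=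
          hrel_mul_left H _ hrel
        have h2 : u * (↑w⁻¹ : FM Fu P) * ↑w = u := by
          rw [mul_assoc]
          simp
        rwa [h2] at h1
    · right
      intro u y hu hy hrel
      rcases hy with hy | rfl
      · exact absurd ⟨u, y, hu, hy, hrel⟩ hex
      · exact hrel
  · constructor
    · -- C union of groups → C* union of groups
      intro hC y hy
      rcases hy with hy | rfl
      · obtain ⟨e, he, hye, z, hyz⟩ := hC y
        by_cases heu : IsUnit e
        · -- e is a unit, so e ~ 1; use e' = 1, z' = y*z*z
          obtain ⟨w, rfl⟩ := heu
          have he1 : HRel H (↑w : FM Fu P) 1 := by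
            have h1 : HRel H ((↑w⁻¹ : FM Fu P) * (↑w * ↑w)) ((↑w⁻¹ : FM Fu P) * ↑w) :=
              hrel_mul_left H _ he
            have e1 : (↑w⁻¹ : FM Fu P) * (↑w * ↑w) = ↑w := by
              rw [← mul_assoc]; simp
            have e2 : (↑w⁻¹ : FM Fu P) * ↑w = 1 := by simp
            rwa [e1, e2] at h1
          refine ⟨1, Or.inr rfl, hrel_of_eq H (by simp), hrel_of_eq H (by simp),
            y * z * z, Or.inl ?_, ?_⟩
          · intro h
            exact hy (isUnit_of_mul_isUnit_left (isUnit_of_mul_isUnit_left h))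
          · have hsq : HRel H ((y * z) * (y * z)) (↑w : FM Fu P) := hrel_sq H hyz he
            have heq : y * (y * z * z) = (y * z) * (y * z) := by
              simp [mul_assoc, mul_comm, mul_left_comm]
            exact hrel_trans H (hrel_of_eq H heq) (hrel_trans H hsq he1)
        · refine ⟨e, Or.inl heu, he, hye, y * z * z, Or.inl ?_, ?_⟩
          · intro h
            exact hy (isUnit_of_mul_isUnit_left (isUnit_of_mul_isUnit_left h))
          · have hsq : HRel H ((y * z) * (y * z)) e := hrel_sq H hyz he
            have heq : y * (y * z * z) = (y * z) * (y * z) := by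
              simp [mul_assoc, mul_comm, mul_left_comm]
            exact hrel_trans H (hrel_of_eq H heq) hsq
      · exact ⟨1, Or.inr rfl, hrel_of_eq H (by simp), hrel_of_eq H (by simp),
          1, Or.inr rfl, hrel_of_eq H (by simp)⟩
    · -- C* union of groups → C union of groups
      intro hCs y
      by_cases hu : IsUnit y
      · obtain ⟨w, rfl⟩ := hu
        refine ⟨1, hrel_of_eq H (by simp), hrel_of_eq H (by simp),
          (↑w⁻¹ : FM Fu P), hrel_of_eq H (by simp)⟩
      · obtain ⟨e, _, he, hye, z, _, hyz⟩ := hCs y (Or.inl hu)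
        exact ⟨e, he, hye, z, hyz⟩
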